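/- For m = n, p = c/n with constant c > 0, and k ≥ 3, the expected number of closed vertex-label sequences of size k in the weighted random intersection graph satisfies E[C_k] = (1/k)·(n!/(n−k)!)²·(c/n)^{2k} ≤ (e²/(2π))·(n/(k(n−k)))·c^{2k}, which is at most (e/(2π))·c^{2k} for all sufficiently large n. -/

import Mathlib

set_option maxHeartbeats 1000000

open Finset

/-- Probability of outcome `ω` under i.i.d. Bernoulli(p) entries. -/
def bprob (m n : ℕ) (p : ℝ) (ω : Fin m → Fin n → Bool) : ℝ :=
  ∏ ℓ, ∏ v, if ω ℓ v then p else 1 - p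

/-- Number of rooted closed vertex-label sequences of size `k` (each unrooted
sequence counted `k` times). -/
def seqCount (m n k : ℕ) (ω : Fin m → Fin n → Bool) : ℕ :=
  (Finset.univ.filter fun vl : (Fin k → Fin n) × (Fin k → Fin m) =>
    Function.Injective vl.1 ∧ Function.Injective vl.2 ∧
    ∀ i, ω (vl.2 i) (vl.1 i) = true ∧ ω (vl.2 i) (vl.1 (finRotate k i)) = true).card

lemma finRotate_ne' (k : ℕ) (hk : 2 ≤ k) (i : Fin k) : finRotate k i ≠ i := by
  obtain ⟨m, rfl⟩ : ∃ m, k = m + 2 := ⟨k - 2, by omega⟩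
  rw [finRotate_succ_apply]
  intro h
  have h1 : (1 : Fin (m + 2)) = 0 := by
    have := add_left_cancel (a := i) (b := (1 : Fin (m + 2))) (c := 0) (by simp [h])
    simpa using this
  simp [Fin.ext_iff] at h1

lemma sum_prod_fn {α β : Type*} [Fintype α] [DecidableEq α] [Fintype β]
    (F : α → β → ℝ) :
    ∑ ω : α → β, ∏ a, F a (ω a) = ∏ a, ∑ b, F a b := by
  rw [Finset.prod_univ_sum, Fintype.piFinset_univ]

lemma sum_prod_fn2 {α β : Type*} [Fintype α] [DecidableEq α] [Fintype β] [DecidableEq β]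
    (F : α → β → Bool → ℝ) :
    ∑ ω : α → β → Bool, ∏ a, ∏ b, F a b (ω a b) = ∏ a, ∏ b, ∑ c : Bool, F a b c := by
  have h1 := sum_prod_fn (β := β → Bool) (fun a row => ∏ b, F a b (row b))
  beta_reduce at h1
  rw [h1]
  exact Finset.prod_congr rfl fun a _ => sum_prod_fn (F a)

lemma card_inj_filter (k n : ℕ) :
    (Finset.univ.filter fun f : Fin k → Fin n => Function.Injective f).card
      = n.descFactorial k := by
  classical
  have h1 : Fintype.card {f : Fin k → Fin n // Function.Injective f}
      = Fintype.card (Fin k ↪ Fin n) :=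
    Fintype.card_congr (Equiv.subtypeInjectiveEquivEmbedding _ _)
  rw [← Fintype.card_subtype, h1, Fintype.card_embedding_eq, Fintype.card_fin, Fintype.card_fin]

lemma sum_cond (m n k : ℕ) (hk : 2 ≤ k) (p : ℝ)
    (v : Fin k → Fin n) (l : Fin k → Fin m)
    (hv : Function.Injective v) (hl : Function.Injective l) :
    ∑ ω : Fin m → Fin n → Bool,
      (if ∀ i, ω (l i) (v i) = true ∧ ω (l i) (v (finRotate k i)) = true
       then bprob m n p ω else 0) = p ^ (2 * k) := by
  classical
  set A : Finset (Fin m × Fin n) := Finset.univ.image (fun i => (l i, v i)) with hA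
  set B : Finset (Fin m × Fin n) := Finset.univ.image (fun i => (l i, v (finRotate k i))) with hB
  set E : Finset (Fin m × Fin n) := A ∪ B with hE
  have hinjA : Function.Injective (fun i => (l i, v i)) := by
    intro i j h; exact hl (congrArg Prod.fst h)
  have hinjB : Function.Injective (fun i => (l i, v (finRotate k i))) := by
    intro i j h; exact hl (congrArg Prod.fst h)
  have hdisj : Disjoint A B := by
    rw [Finset.disjoint_left]
    intro x hxA hxB
    rw [hA, Finset.mem_image] at hxA
    rw [hB, Finset.mem_image] at hxB
    obtain ⟨i, -, hi⟩ := hxA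
    obtain ⟨j, -, hj⟩ := hxB
    rw [← hj] at hi
    have hij : i = j := hl (congrArg Prod.fst hi)
    subst hij
    have h2 : v i = v (finRotate k i) := congrArg Prod.snd hi
    exact finRotate_ne' k hk i (hv h2).symm
  have hcard : E.card = 2 * k := by
    rw [hE, Finset.card_union_of_disjoint hdisj, hA, hB,
      Finset.card_image_of_injective _ hinjA, Finset.card_image_of_injective _ hinjB]
    simp [two_mul]
  have hmemA : ∀ i : Fin k, (l i, v i) ∈ E := by
    intro i; rw [hE, Finset.mem_union]; left; rw [hA, Finset.mem_image]; exact ⟨i, mem_univ i, rfl⟩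
  have hmemB : ∀ i : Fin k, (l i, v (finRotate k i)) ∈ E := by
    intro i; rw [hE, Finset.mem_union]; right; rw [hB, Finset.mem_image]; exact ⟨i, mem_univ i, rfl⟩
  have key : ∀ ω : Fin m → Fin n → Bool,
      (if ∀ i, ω (l i) (v i) = true ∧ ω (l i) (v (finRotate k i)) = true
       then bprob m n p ω else 0)
      = ∏ ℓ, ∏ x, (if (ℓ, x) ∈ E then (if ω ℓ x then p else 0)
                   else (if ω ℓ x then p else 1 - p)) := by
    intro ω
    by_cases h : ∀ i, ω (l i) (v i) = true ∧ ω (l i) (v (finRotate k i)) = true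
    · rw [if_pos h]
      unfold bprob
      refine Finset.prod_congr rfl fun ℓ _ => Finset.prod_congr rfl fun x _ => ?_
      by_cases he : (ℓ, x) ∈ E
      · have hx : ω ℓ x = true := by
          rw [hE, Finset.mem_union] at he
          rcases he with he | he
          · rw [hA, Finset.mem_image] at he
            obtain ⟨i, -, hi⟩ := he
            have h1 : l i = ℓ := congrArg Prod.fst hi
            have h2 : v i = x := congrArg Prod.snd hi
            rw [← h1, ← h2]; exact (h i).1
          · rw [hB, Finset.mem_image] at he
            obtain ⟨i, -, hi⟩ := he
            have h1 : l i = ℓ := congrArg Prod.fst hi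
            have h2 : v (finRotate k i) = x := congrArg Prod.snd hi
            rw [← h1, ← h2]; exact (h i).2
        simp [he, hx]
      · simp [he]
    · rw [if_neg h]
      push_neg at h
      obtain ⟨i, hi⟩ := h
      by_cases h1 : ω (l i) (v i) = true
      · have h2 : ω (l i) (v (finRotate k i)) = false := by
          have := hi h1
          simpa using this
        symm
        refine Finset.prod_eq_zero (Finset.mem_univ (l i)) ?_
        refine Finset.prod_eq_zero (Finset.mem_univ (v (finRotate k i))) ?_
        simp only [hmemB i, h2]
        simp
      · have h2 : ω (l i) (v i) = false := by simpa using h1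
        symm
        refine Finset.prod_eq_zero (Finset.mem_univ (l i)) ?_
        refine Finset.prod_eq_zero (Finset.mem_univ (v i)) ?_
        simp [hmemA i, h2]
  calc ∑ ω : Fin m → Fin n → Bool,
        (if ∀ i, ω (l i) (v i) = true ∧ ω (l i) (v (finRotate k i)) = true
         then bprob m n p ω else 0)
      = ∑ ω : Fin m → Fin n → Bool, ∏ ℓ, ∏ x,
          (if (ℓ, x) ∈ E then (if ω ℓ x then p else 0)
           else (if ω ℓ x then p else 1 - p)) :=
        Finset.sum_congr rfl fun ω _ => key ω
    _ = ∏ ℓ, ∏ x, ∑ b : Bool,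
          (if (ℓ, x) ∈ E then (if b then p else 0)
           else (if b then p else 1 - p)) :=
        sum_prod_fn2 (fun ℓ x b => if (ℓ, x) ∈ E then (if b then p else 0)
           else (if b then p else 1 - p))
    _ = ∏ ℓ, ∏ x, (if (ℓ, x) ∈ E then p else 1) := by
        refine Finset.prod_congr rfl fun ℓ _ => Finset.prod_congr rfl fun x _ => ?_
        by_cases hmem : (ℓ, x) ∈ E <;> simp [hmem] <;> ring
    _ = ∏ e : Fin m × Fin n, (if e ∈ E then p else 1) := by
        rw [Fintype.prod_prod_type]
    _ = p ^ (2 * k) := by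
        rw [Finset.prod_ite_mem, Finset.univ_inter, Finset.prod_const, hcard]

lemma expect_eq (k : ℕ) (hk : 3 ≤ k) (c : ℝ) (n : ℕ) (hn : k < n) :
    (∑ ω : Fin n → Fin n → Bool,
        bprob n n (c / n) ω * ((seqCount n n k ω : ℝ) / k))
      = (1 / (k : ℝ)) * ((n.descFactorial k : ℝ)) ^ 2 * (c / n) ^ (2 * k) := by
  classical
  have hsum : ∑ ω : Fin n → Fin n → Bool, bprob n n (c / n) ω * (seqCount n n k ω : ℝ)
      = ((n.descFactorial k : ℝ)) ^ 2 * (c / n) ^ (2 * k) := by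
    have step1 : ∀ ω : Fin n → Fin n → Bool, bprob n n (c / n) ω * (seqCount n n k ω : ℝ)
        = ∑ vl : (Fin k → Fin n) × (Fin k → Fin n),
            if (Function.Injective vl.1 ∧ Function.Injective vl.2 ∧
                ∀ i, ω (vl.2 i) (vl.1 i) = true ∧ ω (vl.2 i) (vl.1 (finRotate k i)) = true)
            then bprob n n (c / n) ω else 0 := by
      intro ω
      rw [seqCount, ← Finset.sum_filter]
      rw [Finset.sum_const, nsmul_eq_mul, mul_comm]
    rw [Finset.sum_congr rfl (fun ω _ => step1 ω), Finset.sum_comm]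
    have step2 : ∀ vl : (Fin k → Fin n) × (Fin k → Fin n),
        (∑ ω : Fin n → Fin n → Bool,
          if (Function.Injective vl.1 ∧ Function.Injective vl.2 ∧
              ∀ i, ω (vl.2 i) (vl.1 i) = true ∧ ω (vl.2 i) (vl.1 (finRotate k i)) = true)
          then bprob n n (c / n) ω else 0)
        = if (Function.Injective vl.1 ∧ Function.Injective vl.2)
          then (c / n) ^ (2 * k) else 0 := by
      intro vl
      by_cases hinj : Function.Injective vl.1 ∧ Function.Injective vl.2
      · rw [if_pos hinj,
          ← sum_cond n n k (by omega) (c / n) vl.1 vl.2 hinj.1 hinj.2]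
        refine Finset.sum_congr rfl fun ω _ => ?_
        simp [hinj.1, hinj.2]
      · rw [if_neg hinj]
        refine Finset.sum_eq_zero fun ω _ => ?_
        rw [if_neg (by tauto)]
    rw [Finset.sum_congr rfl (fun vl _ => step2 vl), ← Finset.sum_filter,
      Finset.sum_const, nsmul_eq_mul]
    congr 1
    have hcard : (Finset.univ.filter fun vl : (Fin k → Fin n) × (Fin k → Fin n) =>
        Function.Injective vl.1 ∧ Function.Injective vl.2).card
        = (n.descFactorial k) ^ 2 := by
      rw [← Finset.univ_product_univ, Finset.filter_product, Finset.card_product,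
        card_inj_filter]
      ring
    rw [hcard]
    push_cast
    ring
  calc ∑ ω : Fin n → Fin n → Bool, bprob n n (c / n) ω * ((seqCount n n k ω : ℝ) / k)
      = (∑ ω : Fin n → Fin n → Bool, bprob n n (c / n) ω * (seqCount n n k ω : ℝ)) / k := by
        rw [Finset.sum_div]
        exact Finset.sum_congr rfl fun ω _ => (mul_div_assoc _ _ _).symm
    _ = (1 / (k : ℝ)) * ((n.descFactorial k : ℝ)) ^ 2 * (c / n) ^ (2 * k) := by
        rw [hsum]; ring

theorem stmt14 (k : ℕ) (hk : 3 ≤ k) (c : ℝ) (hc : 0 < c) :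
    (∀ n : ℕ, k < n →
      ((∑ ω : Fin n → Fin n → Bool,
          bprob n n (c / n) ω * ((seqCount n n k ω : ℝ) / k))
        = (1 / (k : ℝ)) * ((n.descFactorial k : ℝ)) ^ 2 * (c / n) ^ (2 * k)) ∧
      (1 / (k : ℝ)) * ((n.descFactorial k : ℝ)) ^ 2 * (c / n) ^ (2 * k)
        ≤ (Real.exp 1) ^ 2 / (2 * Real.pi) * ((n : ℝ) / ((k : ℝ) * ((n : ℝ) - k)))
            * c ^ (2 * k)) ∧
    ∃ N : ℕ, ∀ n : ℕ, N ≤ n → k < n →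
      (∑ ω : Fin n → Fin n → Bool,
          bprob n n (c / n) ω * ((seqCount n n k ω : ℝ) / k))
        ≤ Real.exp 1 / (2 * Real.pi) * c ^ (2 * k) := by
  have hkR : (0 : ℝ) < k := by
    have h0 : 0 < k := by omega
    exact_mod_cast h0
  have hbound : ∀ n : ℕ, k < n →
      (1 / (k : ℝ)) * ((n.descFactorial k : ℝ)) ^ 2 * (c / n) ^ (2 * k)
        ≤ (1 / (k : ℝ)) * c ^ (2 * k) := by
    intro n hn
    have hnR : (0 : ℝ) < n := by
      have h0 : 0 < n := by omega
      exact_mod_cast h0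
    have hD : ((n.descFactorial k : ℝ)) ≤ (n : ℝ) ^ k := by
      exact_mod_cast Nat.descFactorial_le_pow n k
    have hD0 : (0 : ℝ) ≤ ((n.descFactorial k : ℝ)) := by positivity
    have hD2 : ((n.descFactorial k : ℝ)) ^ 2 ≤ (n : ℝ) ^ (2 * k) := by
      calc ((n.descFactorial k : ℝ)) ^ 2 ≤ ((n : ℝ) ^ k) ^ 2 := by
            exact pow_le_pow_left₀ hD0 hD 2
        _ = (n : ℝ) ^ (2 * k) := by rw [← pow_mul]; ring_nf
    have hdiv : (c / n) ^ (2 * k) = c ^ (2 * k) / (n : ℝ) ^ (2 * k) := div_pow c _ _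
    rw [hdiv]
    rw [div_eq_mul_inv]
    have hfin : ((n.descFactorial k : ℝ)) ^ 2 * ((n : ℝ) ^ (2 * k))⁻¹ ≤ 1 := by
      rw [← div_eq_mul_inv, div_le_one (by positivity)]
      exact hD2
    calc (1 / (k : ℝ)) * ((n.descFactorial k : ℝ)) ^ 2 * (c ^ (2 * k) * ((n : ℝ) ^ (2 * k))⁻¹)
        = (1 / (k : ℝ)) * c ^ (2 * k) * (((n.descFactorial k : ℝ)) ^ 2 * ((n : ℝ) ^ (2 * k))⁻¹) := by ring
      _ ≤ (1 / (k : ℝ)) * c ^ (2 * k) * 1 := by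
          refine mul_le_mul_of_nonneg_left hfin (by positivity)
      _ = (1 / (k : ℝ)) * c ^ (2 * k) := by ring
  have hpi : (0 : ℝ) < Real.pi := Real.pi_pos
  have hpi315 : Real.pi < 3.15 := Real.pi_lt_d2
  have he : (2.7182818283 : ℝ) < Real.exp 1 := Real.exp_one_gt_d9
  refine ⟨fun n hn => ⟨expect_eq k hk c n hn, ?_⟩, ⟨0, fun n _ hn => ?_⟩⟩
  · -- part 2
    have hnR : (k : ℝ) < (n : ℝ) := by exact_mod_cast hn
    have hnk : (0 : ℝ) < (n : ℝ) - k := by linarith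
    have h1 : (1 / (k : ℝ)) * c ^ (2 * k)
        ≤ (Real.exp 1) ^ 2 / (2 * Real.pi) * ((n : ℝ) / ((k : ℝ) * ((n : ℝ) - k))) * c ^ (2 * k) := by
      have hc2 : (0 : ℝ) ≤ c ^ (2 * k) := by positivity
      refine mul_le_mul_of_nonneg_right ?_ hc2
      have hA : (1 : ℝ) ≤ (Real.exp 1) ^ 2 / (2 * Real.pi) := by
        rw [le_div_iff₀ (by positivity)]
        nlinarith
      have hB : (1 : ℝ) / (k : ℝ) ≤ (n : ℝ) / ((k : ℝ) * ((n : ℝ) - k)) := by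
        rw [div_le_div_iff₀ hkR (by positivity)]
        nlinarith
      calc (1 : ℝ) / (k : ℝ) ≤ (n : ℝ) / ((k : ℝ) * ((n : ℝ) - k)) := hB
        _ = 1 * ((n : ℝ) / ((k : ℝ) * ((n : ℝ) - k))) := by ring
        _ ≤ (Real.exp 1) ^ 2 / (2 * Real.pi) * ((n : ℝ) / ((k : ℝ) * ((n : ℝ) - k))) := by
            refine mul_le_mul_of_nonneg_right hA (by positivity)
    exact le_trans (hbound n hn) h1
  · -- part 3
    rw [expect_eq k hk c n hn]
    refine le_trans (hbound n hn) ?_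
    have hc2 : (0 : ℝ) ≤ c ^ (2 * k) := by positivity
    refine mul_le_mul_of_nonneg_right ?_ hc2
    have hk3 : (3 : ℝ) ≤ (k : ℝ) := by exact_mod_cast hk
    have h13 : (1 : ℝ) / k ≤ 1 / 3 := by
      apply div_le_div_of_nonneg_left <;> linarith
    refine le_trans h13 ?_
    rw [div_le_div_iff₀ (by norm_num) (by positivity)]
    nlinarith
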